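/- Let σ > 0 and let w(y,τ) = (4y/σ²)·exp(−1/(2yτ)) for y > 0, τ > 0. Then for every fixed y > 0, w(y,τ) → 0 as τ → 0⁺; moreover, for every M > 0 the convergence is uniform over y ∈ (0, M]. Hence w extends continuously by 0 to τ = 0, giving a not-identically-zero solution of w_τ = 2y³·w_yy with zero initial data. -/
import Mathlib


open Real Filter Topology

/-- The function `w(y,τ) = (4y/σ²)·exp(−1/(2yτ))`. -/
noncomputable def wHLW (σ : ℝ) (y τ : ℝ) : ℝ :=
  4 * y / σ ^ 2 * Real.exp (-(1 / (2 * y * τ)))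

lemma exp_aux (c : ℝ) (hc : 0 < c) :
    Tendsto (fun τ : ℝ => Real.exp (-(1 / (c * τ)))) (𝓝[>] (0 : ℝ)) (𝓝 0) := by
  have h1 : Tendsto (fun τ : ℝ => c * τ) (𝓝[>] (0 : ℝ)) (𝓝[>] 0) := by
    apply tendsto_nhdsWithin_of_tendsto_nhds_of_eventually_within
    · have : Tendsto (fun τ : ℝ => c * τ) (𝓝 (0:ℝ)) (𝓝 (c * 0)) :=
        (continuous_const.mul continuous_id).tendsto 0
      simpa using this.mono_left nhdsWithin_le_nhds
    · filter_upwards [self_mem_nhdsWithin] with τ hτ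
      exact mul_pos hc hτ
  have h3 : Tendsto (fun τ : ℝ => 1 / (c * τ)) (𝓝[>] (0 : ℝ)) atTop := by
    have := tendsto_inv_nhdsGT_zero.comp h1
    simpa [Function.comp_def, one_div] using this
  exact Real.tendsto_exp_neg_atTop_nhds_zero.comp h3

/-- for every fixed `y > 0`, `w(y,τ) → 0` as `τ → 0⁺`, and the
convergence is uniform over `y ∈ (0,M]` for every `M > 0`. Hence `w` extends
continuously by `0` to `τ = 0`, giving a not-identically-zero solution with
zero initial data. -/
theorem wHLW_zero_initial_trace (σ : ℝ) (hσ : 0 < σ) :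
    (∀ y : ℝ, 0 < y →
      Tendsto (fun τ => wHLW σ y τ) (𝓝[>] (0 : ℝ)) (𝓝 (0 : ℝ))) ∧
    (∀ M : ℝ, 0 < M →
      TendstoUniformlyOn (fun τ y => wHLW σ y τ) (fun _ => (0 : ℝ))
        (𝓝[>] (0 : ℝ)) (Set.Ioc 0 M)) ∧
    (∃ wbar : ℝ → ℝ → ℝ,
      (∀ y τ : ℝ, 0 < y → 0 < τ → wbar y τ = wHLW σ y τ) ∧
      (∀ y : ℝ, 0 < y → wbar y 0 = 0) ∧
      (∀ y : ℝ, 0 < y →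
        ContinuousWithinAt (fun τ => wbar y τ) (Set.Ici 0) 0) ∧
      (∃ y τ : ℝ, 0 < y ∧ 0 < τ ∧ wbar y τ ≠ 0)) := by
  have hσ2 : (0:ℝ) < σ ^ 2 := by positivity
  have hpt : ∀ y : ℝ, 0 < y →
      Tendsto (fun τ => wHLW σ y τ) (𝓝[>] (0 : ℝ)) (𝓝 (0 : ℝ)) := by
    intro y hy
    have := (exp_aux (2 * y) (by positivity)).const_mul (4 * y / σ ^ 2)
    simpa [wHLW, mul_comm] using this
  refine ⟨hpt, ?_, ?_⟩
  · -- uniform convergence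
    intro M hM
    rw [Metric.tendstoUniformlyOn_iff]
    intro ε hε
    have hB : Tendsto (fun τ : ℝ => 4 * M / σ ^ 2 * Real.exp (-(1 / (2 * M * τ))))
        (𝓝[>] (0 : ℝ)) (𝓝 0) := by
      simpa using (exp_aux (2 * M) (by positivity)).const_mul (4 * M / σ ^ 2)
    have hev := hB.eventually (eventually_lt_nhds hε) -- |B τ| < ε? B τ < ε
    filter_upwards [hev, self_mem_nhdsWithin] with τ hτ hτpos y hy
    have hy0 : 0 < y := hy.1
    have hyM : y ≤ M := hy.2
    have hwpos : 0 ≤ wHLW σ y τ := by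
      unfold wHLW
      positivity
    have hτ0 : (0:ℝ) < τ := hτpos
    have hbound : wHLW σ y τ ≤ 4 * M / σ ^ 2 * Real.exp (-(1 / (2 * M * τ))) := by
      unfold wHLW
      have hexp : Real.exp (-(1 / (2 * y * τ))) ≤ Real.exp (-(1 / (2 * M * τ))) := by
        apply Real.exp_le_exp.mpr
        have h1 : (0:ℝ) < 2 * y * τ := by positivity
        have : 1 / (2 * M * τ) ≤ 1 / (2 * y * τ) := by
          apply one_div_le_one_div_of_le h1
          nlinarith
        linarith
      have h4 : 4 * y / σ ^ 2 ≤ 4 * M / σ ^ 2 := by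
        gcongr
      exact mul_le_mul h4 hexp (Real.exp_pos _).le (by positivity)
    rw [Real.dist_eq]
    have : |0 - wHLW σ y τ| = wHLW σ y τ := by
      rw [zero_sub, abs_neg, abs_of_nonneg hwpos]
    rw [this]
    exact lt_of_le_of_lt hbound hτ
  · -- extension
    refine ⟨fun y τ => if 0 < τ then wHLW σ y τ else 0, ?_, ?_, ?_, ?_⟩
    · intro y τ hy hτ; simp [hτ]
    · intro y hy; simp
    · intro y hy
      unfold ContinuousWithinAt
      simp only [lt_self_iff_false, if_false]
      rw [show Set.Ici (0:ℝ) = {0} ∪ Set.Ioi 0 by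
            ext x; simp [le_iff_lt_or_eq, or_comm, eq_comm], nhdsWithin_union]
      rw [tendsto_sup]
      constructor
      · rw [nhdsWithin_singleton]
        simpa using tendsto_pure_nhds (fun τ : ℝ => if 0 < τ then wHLW σ y τ else 0) 0
      · apply (hpt y hy).congr'
        filter_upwards [self_mem_nhdsWithin] with τ hτ
        simp [Set.mem_Ioi.mp hτ]
    · refine ⟨1, 1, one_pos, one_pos, ?_⟩
      simp only [if_pos one_pos]
      unfold wHLW
      positivity
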